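/- Every element of G has determinant 1 (i.e., G ⊆ SL_{N+1}(ℂ)) if and only if the function π : {0,…,N} → ℚ defined by π(i) = 1/M_i is an LS-path over (S, ≤, b), i.e., if and only if b_j·(1/M_0 + 1/M_1 + ⋯ + 1/M_j) ∈ ℤ for all 0 ≤ j ≤ N−1 and 1/M_0 + 1/M_1 + ⋯ + 1/M_N ∈ ℤ. -/

import Mathlib

open Finset MvPolynomial

/-- `Mf b i` is `M_i = lcm(b_{i-1}, b_i)`, with the convention `b_{-1} = 1`
(the convention `b_N = 1` is imposed as a hypothesis in the statements). -/
def Mf (b : ℕ → ℕ) (i : ℕ) : ℕ := Nat.lcm (if i = 0 then 1 else b (i - 1)) (b i)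

/-- An LS-path of degree `r` over the totally ordered set `{0, …, N}` with bonds `b`:
a function `π : {0,…,N} → ℚ` (modelled as `π : ℕ → ℚ` vanishing above `N`) with
nonnegative values, integrality `b_j·(π 0 + ⋯ + π j) ∈ ℤ` for all `0 ≤ j ≤ N-1`,
and total sum `π 0 + ⋯ + π N = r`. -/
def IsLSPath (N : ℕ) (b : ℕ → ℕ) (r : ℕ) (π : ℕ → ℚ) : Prop :=
  (∀ i, 0 ≤ π i) ∧ (∀ i, N < i → π i = 0) ∧
  (∀ j < N, ∃ k : ℤ, (b j : ℚ) * (∑ i ∈ Finset.range (j + 1), π i) = k) ∧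
  (∑ i ∈ Finset.range (N + 1), π i = r)

/-- `SuppLE π π'` says `max supp π ≤ min supp π'`:
every element of the support of `π` is `≤` every element of the support of `π'`. -/
def SuppLE (π π' : ℕ → ℚ) : Prop := ∀ i j, π i ≠ 0 → π' j ≠ 0 → i ≤ j

/-- The monomial `x^π = ∏_{i=0}^{N} x_i ^ (M_i · π i)` in `ℂ[x_0,…,x_N]`
(the exponents `M_i · π i` are nonnegative integers for an LS-path `π`). -/
noncomputable def xpow (N : ℕ) (b : ℕ → ℕ) (π : ℕ → ℚ) :
    MvPolynomial (Fin (N + 1)) ℂ :=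
  MvPolynomial.monomial
    (Finsupp.equivFunOnFinite.symm fun i : Fin (N + 1) => ⌊(Mf b i : ℚ) * π i⌋₊) (1 : ℂ)

/-- The discrete LS algebra over `(S, ≤, b)`: the `ℂ`-linear span in `ℂ[x_0,…,x_N]`
of the monomials `x^π`, with `π` ranging over all LS-paths of all degrees. -/
noncomputable def discreteLS (N : ℕ) (b : ℕ → ℕ) :
    Submodule ℂ (MvPolynomial (Fin (N + 1)) ℂ) :=
  Submodule.span ℂ {p | ∃ r π, IsLSPath N b r π ∧ p = xpow N b π}

/-- The degree-`r` graded component `A_r = span_ℂ {x^π : π an LS-path of degree r}`. -/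
noncomputable def discreteLSdeg (N : ℕ) (b : ℕ → ℕ) (r : ℕ) :
    Submodule ℂ (MvPolynomial (Fin (N + 1)) ℂ) :=
  Submodule.span ℂ {p | ∃ π, IsLSPath N b r π ∧ p = xpow N b π}

/-- The diagonal matrix `e_i = diag(ζ^{(M/M_0)b_i}, …, ζ^{(M/M_i)b_i}, 1, …, 1)`
in `GL_{N+1}(ℂ)`, where `M = lcm(b_0, …, b_{N-1})`. -/
noncomputable def eMat (N : ℕ) (b : ℕ → ℕ) (ζ : ℂ) (i : ℕ) :
    Matrix (Fin (N + 1)) (Fin (N + 1)) ℂ :=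
  Matrix.diagonal fun j : Fin (N + 1) =>
    if (j : ℕ) ≤ i then ζ ^ ((Finset.range N).lcm b / Mf b (j : ℕ) * b i) else 1

/-- The subgroup `G` of `GL_{N+1}(ℂ)` generated by `e_0, e_1, …, e_N`. -/
noncomputable def Ggrp (N : ℕ) (b : ℕ → ℕ) (ζ : ℂ) :
    Subgroup (Matrix (Fin (N + 1)) (Fin (N + 1)) ℂ)ˣ :=
  Subgroup.closure
    {u | ∃ i ≤ N, (u : Matrix (Fin (N + 1)) (Fin (N + 1)) ℂ) = eMat N b ζ i}

/-- The linear action of a matrix `g` on `ℂ[x_0,…,x_N]`: a diagonal matrix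
`diag(d_0,…,d_N)` acts as the `ℂ`-algebra automorphism sending `x_j` to `d_j · x_j`. -/
noncomputable def matAct (N : ℕ) (g : Matrix (Fin (N + 1)) (Fin (N + 1)) ℂ) :
    MvPolynomial (Fin (N + 1)) ℂ →ₐ[ℂ] MvPolynomial (Fin (N + 1)) ℂ :=
  MvPolynomial.aeval fun j : Fin (N + 1) =>
    ∑ k : Fin (N + 1), MvPolynomial.C (g j k) * MvPolynomial.X k

/-- Every element of `G` has determinant `1` (i.e. `G ⊆ SL_{N+1}(ℂ)`) if and only if the
function `i ↦ 1/M_i` on `{0,…,N}` is an LS-path over `(S, ≤, b)`, i.e. iff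
`b_j·(1/M_0 + ⋯ + 1/M_j) ∈ ℤ` for all `0 ≤ j ≤ N-1` and `1/M_0 + ⋯ + 1/M_N ∈ ℤ`. -/
theorem stmt15 (N : ℕ) (hN : 1 ≤ N) (b : ℕ → ℕ) (hb : ∀ i < N, 0 < b i) (hbN : b N = 1)
    (ζ : ℂ) (hζ : IsPrimitiveRoot ζ ((Finset.range N).lcm b)) :
    (∀ u ∈ Ggrp N b ζ, (u : Matrix (Fin (N + 1)) (Fin (N + 1)) ℂ).det = 1) ↔
      ∃ r : ℕ, IsLSPath N b r (fun i => if i ≤ N then (1 : ℚ) / (Mf b i : ℚ) else 0) := by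
  set M := (Finset.range N).lcm b with hM
  have hMpos : 0 < M := by
    rw [Nat.pos_iff_ne_zero, hM, Ne, Finset.lcm_eq_zero_iff]
    rintro ⟨i, hi, h0⟩
    simp only [Finset.coe_range, Set.mem_Iio, Finset.mem_range] at hi
    exact (hb i hi).ne' h0
  have hbpos : ∀ i ≤ N, 0 < b i := by
    intro i hi
    rcases lt_or_eq_of_le hi with h | h
    · exact hb i h
    · subst h; omega
  have hMfpos : ∀ i ≤ N, 0 < Mf b i := by
    intro i hi
    rw [Mf]
    apply Nat.lcm_pos
    · split
      · omega
      · exact hb (i - 1) (by omega)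
    · exact hbpos i hi
  have hMfdvd : ∀ i ≤ N, Mf b i ∣ M := by
    intro i hi
    rw [Mf]
    apply Nat.lcm_dvd
    · split
      · exact one_dvd _
      · exact Finset.dvd_lcm (Finset.mem_range.mpr (by omega))
    · rcases lt_or_eq_of_le hi with h | h
      · exact Finset.dvd_lcm (Finset.mem_range.mpr h)
      · subst h; rw [hbN]; exact one_dvd _
  have hcast : ∀ i ≤ N, ((∑ j ∈ Finset.range (i + 1), M / Mf b j * b i : ℕ) : ℚ)
      = (M : ℚ) * ((b i : ℚ) * ∑ j ∈ Finset.range (i + 1), 1 / (Mf b j : ℚ)) := by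
    intro i hi
    rw [Nat.cast_sum, Finset.mul_sum, Finset.mul_sum]
    refine Finset.sum_congr rfl fun j hj => ?_
    have hjN : j ≤ N := by simp only [Finset.mem_range] at hj; omega
    have hne : (Mf b j : ℚ) ≠ 0 := by exact_mod_cast (hMfpos j hjN).ne'
    rw [Nat.cast_mul, Nat.cast_div (hMfdvd j hjN) hne, div_eq_mul_inv, one_div]
    ring
  have hdvd_iff : ∀ i ≤ N, (M ∣ ∑ j ∈ Finset.range (i + 1), M / Mf b j * b i) ↔
      ∃ k : ℤ, (b i : ℚ) * ∑ j ∈ Finset.range (i + 1), 1 / (Mf b j : ℚ) = k := by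
    intro i hi
    have hMne : (M : ℚ) ≠ 0 := by exact_mod_cast hMpos.ne'
    constructor
    · rintro ⟨m, hm⟩
      refine ⟨m, ?_⟩
      have h1 := hcast i hi
      rw [hm] at h1
      push_cast at h1
      exact (mul_left_cancel₀ hMne h1).symm
    · rintro ⟨k, hk⟩
      have h1 := hcast i hi
      rw [hk] at h1
      have h2 : ((∑ j ∈ Finset.range (i + 1), M / Mf b j * b i : ℕ) : ℤ) = (M : ℤ) * k := by
        have h2' : (((∑ j ∈ Finset.range (i + 1), M / Mf b j * b i : ℕ) : ℤ) : ℚ)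
            = (((M : ℤ) * k : ℤ) : ℚ) := by push_cast at h1 ⊢; exact h1
        exact Int.cast_injective h2'
      have h3 : (M : ℤ) ∣ ((∑ j ∈ Finset.range (i + 1), M / Mf b j * b i : ℕ) : ℤ) := ⟨k, h2⟩
      exact_mod_cast h3
  have hdet : ∀ i ≤ N, (eMat N b ζ i).det = ζ ^ (∑ j ∈ Finset.range (i + 1), M / Mf b j * b i) := by
    intro i hi
    rw [eMat, Matrix.det_diagonal, ← hM]
    have h1 : ∀ j : Fin (N + 1), (if (j : ℕ) ≤ i then ζ ^ (M / Mf b (j : ℕ) * b i) else 1)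
        = ζ ^ (if (j : ℕ) ≤ i then M / Mf b (j : ℕ) * b i else 0) := by
      intro j; split <;> simp
    simp only [h1]
    rw [Finset.prod_pow_eq_pow_sum]
    congr 1
    rw [Fin.sum_univ_eq_sum_range (fun j => if j ≤ i then M / Mf b j * b i else 0) (N + 1)]
    rw [← Finset.sum_subset (Finset.range_subset_range.mpr (by omega : i + 1 ≤ N + 1))
      (fun x hx hnx => if_neg (by simp only [Finset.mem_range] at hx hnx; omega))]
    exact Finset.sum_congr rfl fun x hx => if_pos (by simp only [Finset.mem_range] at hx; omega)
  have hunit : ∀ i ≤ N, ∃ u : (Matrix (Fin (N + 1)) (Fin (N + 1)) ℂ)ˣ,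
      u ∈ Ggrp N b ζ ∧ (u : Matrix (Fin (N + 1)) (Fin (N + 1)) ℂ) = eMat N b ζ i := by
    intro i hi
    have hz : ζ ≠ 0 := hζ.ne_zero hMpos.ne'
    have hU : IsUnit (eMat N b ζ i) := by
      rw [Matrix.isUnit_iff_isUnit_det, hdet i hi]
      exact (isUnit_iff_ne_zero.mpr hz).pow _
    exact ⟨hU.unit, Subgroup.subset_closure ⟨i, hi, hU.unit_spec⟩, hU.unit_spec⟩
  have hcong : ∀ m, m ≤ N → ∑ j ∈ Finset.range (m + 1),
      (if j ≤ N then (1 : ℚ) / (Mf b j : ℚ) else 0) = ∑ j ∈ Finset.range (m + 1), 1 / (Mf b j : ℚ) :=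
    fun m hm => Finset.sum_congr rfl fun x hx =>
      if_pos (by simp only [Finset.mem_range] at hx; omega)
  constructor
  · intro h
    have key : ∀ i ≤ N, ∃ k : ℤ, (b i : ℚ) * ∑ j ∈ Finset.range (i + 1), 1 / (Mf b j : ℚ) = k := by
      intro i hi
      obtain ⟨u, hu, huv⟩ := hunit i hi
      have hd := h u hu
      rw [huv, hdet i hi] at hd
      exact (hdvd_iff i hi).mp ((hζ.pow_eq_one_iff_dvd _).mp hd)
    obtain ⟨k, hk⟩ := key N le_rfl
    rw [hbN, Nat.cast_one, one_mul] at hk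
    have hkpos : 0 < k := by
      have hsp : (0 : ℚ) < ∑ j ∈ Finset.range (N + 1), 1 / (Mf b j : ℚ) := by
        apply Finset.sum_pos
        · intro j hj
          have hjN : j ≤ N := by simp only [Finset.mem_range] at hj; omega
          have : (0 : ℚ) < (Mf b j : ℚ) := by exact_mod_cast hMfpos j hjN
          positivity
        · exact ⟨0, Finset.mem_range.mpr (by omega)⟩
      rw [hk] at hsp
      exact_mod_cast hsp
    refine ⟨k.toNat, fun i => ?_, fun i hi => if_neg (by omega), fun j hj => ?_, ?_⟩
    · dsimp only
      split
      · positivity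
      · exact le_rfl
    · rw [hcong j hj.le]
      exact key j hj.le
    · rw [hcong N le_rfl, hk]
      exact_mod_cast congrArg (fun z : ℤ => (z : ℚ)) (Int.toNat_of_nonneg hkpos.le).symm
  · rintro ⟨r, hpos, hvan, hint, hsum⟩
    have key2 : ∀ i ≤ N, ∃ k : ℤ, (b i : ℚ) * ∑ j ∈ Finset.range (i + 1), 1 / (Mf b j : ℚ) = k := by
      intro i hi
      rcases lt_or_eq_of_le hi with h' | h'
      · obtain ⟨k, hk⟩ := hint i h'
        rw [hcong i hi] at hk
        exact ⟨k, hk⟩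
      · obtain rfl := h'.symm
        refine ⟨r, ?_⟩
        rw [hbN, Nat.cast_one, one_mul]
        rw [hcong N le_rfl] at hsum
        exact_mod_cast hsum
    intro u hu
    refine Subgroup.closure_induction ?_ ?_ ?_ ?_ hu
    · rintro x ⟨i, hi, hx⟩
      rw [hx, hdet i hi, hζ.pow_eq_one_iff_dvd]
      exact (hdvd_iff i hi).mpr (key2 i hi)
    · simp
    · intro x y hx hy hdx hdy
      rw [Units.val_mul, Matrix.det_mul, hdx, hdy, one_mul]
    · intro x hx hdx
      have h2 : (↑(x⁻¹ * x) : Matrix (Fin (N + 1)) (Fin (N + 1)) ℂ).det = 1 := by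
        rw [inv_mul_cancel, Units.val_one, Matrix.det_one]
      rw [Units.val_mul, Matrix.det_mul, hdx, mul_one] at h2
      exact h2
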